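/- Suppose (q,t,ε) is a good triple. Then for every integer 2 ≤ t′ ≤ t, the open interval I_{t′} = ( t′/2 − (1−2ε)t′/(2q), t′/2 + 1 − (1+2ε)t′/(2q) ) contains exactly one integer s_{t′}; furthermore s_{t′} = ⌈t′/2⌉ when t′ ≤ q, and s_{t′} = ⌊t′/2⌋ when t′ > q. -/
import Mathlib


/-- `(q,t,ε)` is a good triple. -/
def GoodTriple (q t : ℕ) (ε : ℝ) : Prop :=
  ∀ t' : ℕ, 2 ≤ t' → t' ≤ t →
    ∃ s : ℕ, 1 ≤ s ∧ s ≤ t' ∧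
      (t' : ℝ) / 2 - (1 - 2 * ε) * (t' : ℝ) / (2 * (q : ℝ)) < (s : ℝ) ∧
      (s : ℝ) < (t' : ℝ) / 2 + 1 - (1 + 2 * ε) * (t' : ℝ) / (2 * (q : ℝ))

theorem stmt9 (q t : ℕ) (hq : 2 ≤ q) (ht : 2 ≤ t)
    (ε : ℝ) (hε0 : 0 < ε) (hε : ε < min ((q : ℝ) / (2 * (t : ℝ))) (1 / 2))
    (hgood : GoodTriple q t ε) :
    ∀ t' : ℕ, 2 ≤ t' → t' ≤ t →
      (∃! s : ℤ, (t' : ℝ) / 2 - (1 - 2 * ε) * (t' : ℝ) / (2 * (q : ℝ)) < (s : ℝ) ∧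
        (s : ℝ) < (t' : ℝ) / 2 + 1 - (1 + 2 * ε) * (t' : ℝ) / (2 * (q : ℝ))) ∧
      (∀ s : ℤ, ((t' : ℝ) / 2 - (1 - 2 * ε) * (t' : ℝ) / (2 * (q : ℝ)) < (s : ℝ) ∧
          (s : ℝ) < (t' : ℝ) / 2 + 1 - (1 + 2 * ε) * (t' : ℝ) / (2 * (q : ℝ))) →
        (t' ≤ q → s = (((t' + 1) / 2 : ℕ) : ℤ)) ∧ (q < t' → s = ((t' / 2 : ℕ) : ℤ))) := by
  have hq0 : (0:ℝ) < (q:ℝ) := by exact_mod_cast (by omega : 0 < q)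
  have hε2 : ε < 1/2 := lt_of_lt_of_le hε (min_le_right _ _)
  -- Key claim: goodness forces t < 2q, since I_{2q} = (q-1+2ε, q-2ε) contains no integer.
  have htlt : t < 2 * q := by
    by_contra h
    push_neg at h
    obtain ⟨s, hs1, hs2, h3, h4⟩ := hgood (2*q) (by omega) h
    have hc : ((2*q : ℕ):ℝ) = 2*(q:ℝ) := by push_cast; ring
    rw [hc] at h3 h4
    have h2q : (2*(q:ℝ)) ≠ 0 := by positivity
    have e1 : (1 - 2*ε)*(2*(q:ℝ))/(2*(q:ℝ)) = 1 - 2*ε := mul_div_cancel_right₀ _ h2q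
    have e2 : (1 + 2*ε)*(2*(q:ℝ))/(2*(q:ℝ)) = 1 + 2*ε := mul_div_cancel_right₀ _ h2q
    rw [e1] at h3
    rw [e2] at h4
    -- now: q - (1-2ε) < s  and  s < q + 1 - (1+2ε) = q - 2ε
    have hlt : s < q := by
      have : (s:ℝ) < q := by linarith
      exact_mod_cast this
    have hge : q ≤ s := by
      have : (q:ℝ) < (s:ℝ) + 1 := by linarith
      have : q < s + 1 := by exact_mod_cast this
      omega
    omega
  intro t' h2 hle
  have ht'0 : (0:ℝ) < (t':ℝ) := by exact_mod_cast (by omega : 0 < t')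
  have hmain : ∀ s : ℤ, ((t' : ℝ) / 2 - (1 - 2 * ε) * (t' : ℝ) / (2 * (q : ℝ)) < (s : ℝ) ∧
          (s : ℝ) < (t' : ℝ) / 2 + 1 - (1 + 2 * ε) * (t' : ℝ) / (2 * (q : ℝ))) →
        (t' ≤ q → s = (((t' + 1) / 2 : ℕ) : ℤ)) ∧ (q < t' → s = ((t' / 2 : ℕ) : ℤ)) := by
    rintro s ⟨h3, h4⟩
    constructor
    · intro hle'
      have ht'q : (t':ℝ) ≤ (q:ℝ) := by exact_mod_cast hle'
      have hb : (1 - 2*ε) * (t':ℝ) / (2*(q:ℝ)) < 1/2 := by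
        rw [div_lt_iff₀ (by positivity)]
        nlinarith
      have hb2 : 0 < (1 + 2*ε) * (t':ℝ) / (2*(q:ℝ)) := by
        apply div_pos (mul_pos (by linarith) ht'0) (by positivity)
      have hA : (t':ℝ) - 1 < 2*(s:ℝ) := by linarith
      have hB : 2*(s:ℝ) < (t':ℝ) + 2 := by linarith
      have hA' : (t':ℤ) - 1 < 2*s := by exact_mod_cast hA
      have hB' : 2*s < (t':ℤ) + 2 := by exact_mod_cast hB
      omega
    · intro hlt'
      have ht'lt : (t':ℝ) < 2*(q:ℝ) := by exact_mod_cast (by omega : t' < 2*q)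
      have ht'gt : (q:ℝ) < (t':ℝ) := by exact_mod_cast hlt'
      have hb : (1 - 2*ε) * (t':ℝ) / (2*(q:ℝ)) < 1 := by
        rw [div_lt_iff₀ (by positivity)]
        nlinarith
      have hb2 : 1/2 < (1 + 2*ε) * (t':ℝ) / (2*(q:ℝ)) := by
        rw [lt_div_iff₀ (by positivity)]
        nlinarith
      have hA : (t':ℝ) - 2 < 2*(s:ℝ) := by linarith
      have hB : 2*(s:ℝ) < (t':ℝ) + 1 := by linarith
      have hA' : (t':ℤ) - 2 < 2*s := by exact_mod_cast hA
      have hB' : 2*s < (t':ℤ) + 1 := by exact_mod_cast hB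
      omega
  refine ⟨?_, hmain⟩
  obtain ⟨s₀, hs01, hs02, h3, h4⟩ := hgood t' h2 hle
  have h3' : (t' : ℝ) / 2 - (1 - 2 * ε) * (t' : ℝ) / (2 * (q : ℝ)) < ((s₀:ℤ):ℝ) := by
    exact_mod_cast h3
  have h4' : ((s₀:ℤ):ℝ) < (t' : ℝ) / 2 + 1 - (1 + 2 * ε) * (t' : ℝ) / (2 * (q : ℝ)) := by
    exact_mod_cast h4
  refine ⟨(s₀:ℤ), ⟨h3', h4'⟩, ?_⟩
  intro y hy
  have H1 := hmain y hy
  have H2 := hmain (s₀:ℤ) ⟨h3', h4'⟩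
  rcases le_or_gt t' q with h | h
  · rw [H1.1 h, H2.1 h]
  · rw [H1.2 h, H2.2 h]
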